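/- Let $Q$ be an $\mathbb{N}^*\setminus Q$-free set. Then for every $\nu>0$, $\sum_{\pi\in\mathrm{Supp}(Q)} \pi^{-\nu} \le \sum_{q\in Q} q^{-\nu} \le \sum_{n\in\mathcal{C}(\mathrm{Supp}(Q))} n^{-\nu}$, and consequently the exponent of convergence $\nu(Q)$ depends only on $\mathrm{Supp}(Q)$: $\sum_{q\in Q} q^{-\nu}$ converges if and only if $\sum_{\pi\in\mathrm{Supp}(Q)} \pi^{-\nu}$ converges. -/

import Mathlib

open scoped ENNReal

private lemma aux_gmul (ν : ℝ) (m n : ℕ) :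
    (((m * n : ℕ)) : ℝ≥0∞) ^ (-ν) = ((m : ℝ≥0∞)) ^ (-ν) * ((n : ℝ≥0∞)) ^ (-ν) := by
  push_cast
  exact ENNReal.mul_rpow_of_ne_top (ENNReal.natCast_ne_top m) (ENNReal.natCast_ne_top n) _

private lemma aux_glist (ν : ℝ) : ∀ l : List ℕ,
    ((l.prod : ℕ) : ℝ≥0∞) ^ (-ν) = (l.map (fun n : ℕ => ((n : ℝ≥0∞)) ^ (-ν))).prod := by
  intro l
  induction l with
  | nil => simp
  | cons a t ih => rw [List.prod_cons, aux_gmul, List.map_cons, List.prod_cons, ih]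

private lemma aux_tsum_fin {α : Type*} (u : α → ℝ≥0∞) :
    ∀ n : ℕ, ∑' v : Fin n → α, ∏ i, u (v i) = (∑' a, u a) ^ n := by
  intro n
  induction n with
  | zero =>
    rw [pow_zero, tsum_eq_single (fun i => i.elim0)]
    · simp
    · intro b hb; exact absurd (funext fun i => i.elim0) hb
  | succ n ih =>
    rw [← (Fin.consEquiv (fun _ : Fin (n + 1) => α)).tsum_eq (fun v => ∏ i, u (v i))]
    have h1 : ∀ (x : α × (Fin n → α)),
        (fun v : Fin (n+1) → α => ∏ i, u (v i)) ((Fin.consEquiv (fun _ => α)) x)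
          = u x.1 * ∏ i : Fin n, u (x.2 i) := by
      intro x
      simp only [Fin.consEquiv, Equiv.coe_fn_mk, Fin.prod_univ_succ, Fin.cons_zero, Fin.cons_succ]
    calc ∑' x : α × (Fin n → α),
          (fun v : Fin (n+1) → α => ∏ i, u (v i)) ((Fin.consEquiv (fun _ => α)) x)
        = ∑' x : α × (Fin n → α), u x.1 * ∏ i : Fin n, u (x.2 i) := tsum_congr h1
      _ = ∑' a, ∑' v : Fin n → α, u a * ∏ i, u (v i) := ENNReal.tsum_prod'
      _ = ∑' a, u a * ∑' v : Fin n → α, ∏ i, u (v i) := by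
          exact tsum_congr fun a => ENNReal.tsum_mul_left
      _ = (∑' a, u a) ^ n * ∑' a, u a := by rw [ENNReal.tsum_mul_right, ih, mul_comm]
      _ = (∑' a, u a) ^ (n + 1) := (pow_succ _ _).symm

private lemma aux_tsum_list {α : Type*} (u : α → ℝ≥0∞) :
    ∑' l : List α, (l.map u).prod = ∑' n : ℕ, (∑' a, u a) ^ n := by
  rw [← List.equivSigmaTuple.symm.tsum_eq (fun l : List α => (l.map u).prod)]
  have h1 : ∀ s : Σ n, Fin n → α,
      (fun l : List α => (l.map u).prod) (List.equivSigmaTuple.symm s) = ∏ i, u (s.2 i) := by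
    rintro ⟨n, v⟩
    simp [List.equivSigmaTuple, List.map_ofFn, List.prod_ofFn, Function.comp]
  rw [tsum_congr h1, ENNReal.tsum_sigma' (fun s : Σ n, Fin n → α => ∏ i, u (s.2 i))]
  exact tsum_congr fun n => aux_tsum_fin u n

private lemma aux_bridge {ι : Type*} {f : ι → ℕ} (hf : ∀ i, 0 < f i) (ν : ℝ) :
    Summable (fun i => ((f i : ℝ)) ^ (-ν)) ↔ (∑' i, ((f i : ℝ≥0∞)) ^ (-ν)) ≠ ⊤ := by
  have key : ∀ i, ((f i : ℝ≥0∞)) ^ (-ν) = ENNReal.ofReal ((f i : ℝ) ^ (-ν)) := by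
    intro i
    rw [← ENNReal.ofReal_natCast, ENNReal.ofReal_rpow_of_pos (by exact_mod_cast hf i)]
  constructor
  · intro h
    rw [tsum_congr key,
      ← ENNReal.ofReal_tsum_of_nonneg (fun i => Real.rpow_nonneg (Nat.cast_nonneg _) _) h]
    exact ENNReal.ofReal_ne_top
  · intro h
    have := ENNReal.summable_toReal h
    refine this.congr fun i => ?_
    rw [key i, ENNReal.toReal_ofReal (Real.rpow_nonneg (Nat.cast_nonneg _) _)]

private lemma aux_key (S : Set ℕ) (hS : ∀ p ∈ S, p.Prime) (ν : ℝ) (hν : 0 < ν)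
    (hfin : ∑' p : S, ((p : ℕ) : ℝ≥0∞) ^ (-ν) ≠ ⊤) :
    ∑' m : {m : ℕ | 0 < m ∧ ∀ p : ℕ, p.Prime → p ∣ m → p ∈ S},
      ((m : ℕ) : ℝ≥0∞) ^ (-ν) ≠ ⊤ := by
  classical
  set g : ℕ → ℝ≥0∞ := fun n => ((n : ℝ≥0∞)) ^ (-ν) with hg
  -- Step A: find a finite subset with small tail
  have htail := ENNReal.tendsto_tsum_compl_atTop_zero (f := fun p : S => g p) hfin
  obtain ⟨F₀, hF₀⟩ := (htail.eventually (gt_mem_nhds (by norm_num : (0 : ℝ≥0∞) < 1/2))).exists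
  set F : Finset ℕ := F₀.image Subtype.val with hF
  have hFS : ∀ p ∈ F, p ∈ S := by
    intro p hp
    obtain ⟨q, _, rfl⟩ := Finset.mem_image.mp hp
    exact q.2
  set S₂ : Set ℕ := S \ ↑F with hS₂
  have ht2 : ∑' p : S₂, g p < 1/2 := by
    refine lt_of_le_of_lt ?_ hF₀
    have hj : Function.Injective (fun q : S₂ => (⟨⟨q.1, q.2.1⟩, fun h =>
        q.2.2 (Finset.mem_image.mpr ⟨_, h, rfl⟩)⟩ : {x : S // x ∉ F₀})) := by
      intro a b hab
      ext
      exact congrArg (fun x => (x.1 : ℕ)) hab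
    exact ENNReal.tsum_comp_le_tsum_of_injective hj (fun x : {x : S // x ∉ F₀} => g x.1)
  -- Step B: the F-factored numbers have finite sum
  have hA : ∑' m : Nat.factoredNumbers F, g m ≠ ⊤ := by
    have hApos : ∀ m : Nat.factoredNumbers F, 0 < (m : ℕ) :=
      fun m => Nat.pos_of_ne_zero m.2.1
    rw [← aux_bridge hApos ν]
    set f : ℕ →* ℝ :=
      { toFun := fun n => ((n : ℝ)) ^ (-ν)
        map_one' := by simp
        map_mul' := by
          intro m n
          push_cast
          exact Real.mul_rpow (Nat.cast_nonneg m) (Nat.cast_nonneg n) } with hf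
    have hlt : ∀ {p : ℕ}, p.Prime → ‖f p‖ < 1 := by
      intro p hp
      have h1 : (1 : ℝ) < (p : ℝ) := by exact_mod_cast hp.one_lt
      have : ((p : ℝ)) ^ (-ν) < 1 :=
        Real.rpow_lt_one_of_one_lt_of_neg h1 (neg_neg_iff_pos.mpr hν)
      rw [hf]
      simpa [abs_of_nonneg (Real.rpow_nonneg (Nat.cast_nonneg p) _)] using this
    have hsum :=
      (EulerProduct.summable_and_hasSum_factoredNumbers_prod_filter_prime_geometric hlt F).1
    exact hsum.of_norm
  -- Step C: the S₂-factored numbers have finite sum (geometric bound)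
  set B : Set ℕ := {m : ℕ | 0 < m ∧ ∀ p : ℕ, p.Prime → p ∣ m → p ∈ S₂} with hB
  have hBmem : ∀ (m : B), ∀ p ∈ (m : ℕ).primeFactorsList, p ∈ S₂ := by
    intro m p hp
    exact m.2.2 p (Nat.prime_of_mem_primeFactorsList hp) (Nat.dvd_of_mem_primeFactorsList hp)
  have hBfin : ∑' m : B, g m ≠ ⊤ := by
    set s : B → List S₂ := fun m => ((m : ℕ).primeFactorsList).pmap Subtype.mk (hBmem m) with hs
    have hmapval : ∀ m : B, (s m).map Subtype.val = (m : ℕ).primeFactorsList := by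
      intro m
      rw [hs]
      simp [List.map_pmap]
    have hval : ∀ m : B, ((s m).map (fun q : S₂ => g q)).prod = g m := by
      intro m
      have h1 : ((s m).map (fun q : S₂ => g q)).prod
          = (((s m).map Subtype.val).map g).prod := by
        rw [List.map_map]; rfl
      rw [h1, hmapval, ← aux_glist ν, Nat.prod_primeFactorsList m.2.1.ne']
    have hinj : Function.Injective s := by
      intro a b hab
      have h1 : (a : ℕ).primeFactorsList = (b : ℕ).primeFactorsList := by
        rw [← hmapval a, ← hmapval b, hab]
      have := congrArg List.prod h1
      rw [Nat.prod_primeFactorsList a.2.1.ne', Nat.prod_primeFactorsList b.2.1.ne'] at this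
      exact Subtype.ext this
    have hle : ∑' m : B, g m ≤ ∑' l : List S₂, (l.map (fun q : S₂ => g q)).prod := by
      calc ∑' m : B, g m = ∑' m : B, ((s m).map (fun q : S₂ => g q)).prod :=
            tsum_congr fun m => (hval m).symm
        _ ≤ _ := ENNReal.tsum_comp_le_tsum_of_injective hinj
              (fun l : List S₂ => (l.map (fun q : S₂ => g q)).prod)
    rw [aux_tsum_list] at hle
    have hgeo : ∑' n : ℕ, (∑' q : S₂, g q) ^ n = (1 - ∑' q : S₂, g q)⁻¹ :=
      ENNReal.tsum_geometric _
    refine ne_top_of_le_ne_top ?_ (hle.trans_eq hgeo)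
    rw [Ne, ENNReal.inv_eq_top, tsub_eq_zero_iff_le]
    intro hcon
    exact absurd (lt_of_le_of_lt hcon ht2) (by norm_num)
  -- Step D: split each m into its F-part and its S₂-part
  set C : Set ℕ := {m : ℕ | 0 < m ∧ ∀ p : ℕ, p.Prime → p ∣ m → p ∈ S} with hC
  have hsplit : ∀ m : C, ∃ (a b : ℕ), a ∈ Nat.factoredNumbers F ∧ b ∈ B ∧ a * b = (m : ℕ) := by
    intro m
    set l := (m : ℕ).primeFactorsList with hl
    have hlS : ∀ p ∈ l, p ∈ S := fun p hp =>
      m.2.2 p (Nat.prime_of_mem_primeFactorsList hp) (Nat.dvd_of_mem_primeFactorsList hp)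
    have hlprime : ∀ p ∈ l, p.Prime := fun p hp => Nat.prime_of_mem_primeFactorsList hp
    refine ⟨(l.filter (· ∈ F)).prod, (l.filter (fun x => !(x ∈ F : Bool))).prod, ?_, ?_, ?_⟩
    · rw [Nat.mem_factoredNumbers']
      intro p hp hdvd
      obtain ⟨q, hq, hpq⟩ := (hp.prime.dvd_prod_iff).mp hdvd
      have hqF := List.of_mem_filter hq
      have hq' := List.mem_of_mem_filter hq
      have : p = q := ((Nat.prime_dvd_prime_iff_eq hp (hlprime q hq')).mp hpq)
      subst this
      simpa using hqF
    · constructor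
      · rw [CanonicallyOrderedAdd.list_prod_pos]
        intro x hx
        exact (hlprime x (List.mem_of_mem_filter hx)).pos
      · intro p hp hdvd
        obtain ⟨q, hq, hpq⟩ := (hp.prime.dvd_prod_iff).mp hdvd
        have hqF := List.of_mem_filter hq
        have hq' := List.mem_of_mem_filter hq
        have : p = q := ((Nat.prime_dvd_prime_iff_eq hp (hlprime q hq')).mp hpq)
        subst this
        refine ⟨hlS p hq', ?_⟩
        simpa using hqF
    · rw [← List.prod_append, (List.filter_append_perm _ l).prod_eq,
        Nat.prod_primeFactorsList m.2.1.ne']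
  choose fa fb hfa hfb hfab using hsplit
  have hCle : ∑' m : C, g m ≤
      (∑' a : Nat.factoredNumbers F, g a) * ∑' b : B, g b := by
    set i : C → Nat.factoredNumbers F × B := fun m => (⟨fa m, hfa m⟩, ⟨fb m, hfb m⟩) with hi
    have hiinj : Function.Injective i := by
      intro a b hab
      have h1 : fa a = fa b := congrArg (fun x => (x.1 : ℕ)) hab
      have h2 : fb a = fb b := congrArg (fun x => (x.2 : ℕ)) hab
      have := hfab a
      rw [h1, h2, hfab b] at this
      exact Subtype.ext this.symm
    calc ∑' m : C, g m
        = ∑' m : C, (fun x : Nat.factoredNumbers F × B => g x.1 * g x.2) (i m) := by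
          refine tsum_congr fun m => ?_
          simp only [hi]
          rw [← aux_gmul, hfab m]
      _ ≤ ∑' x : Nat.factoredNumbers F × B, g x.1 * g x.2 :=
          ENNReal.tsum_comp_le_tsum_of_injective hiinj _
      _ = (∑' a : Nat.factoredNumbers F, g a) * ∑' b : B, g b := by
          rw [ENNReal.tsum_prod']
          calc ∑' (a : Nat.factoredNumbers F) (b : B), g a * g b
              = ∑' a : Nat.factoredNumbers F, g a * ∑' b : B, g b :=
                tsum_congr fun a => ENNReal.tsum_mul_left
            _ = _ := ENNReal.tsum_mul_right
  exact ne_top_of_le_ne_top (ENNReal.mul_ne_top hA hBfin) hCle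

theorem exponent_depends_only_on_support (Q : Set ℕ) (hQpos : ∀ q ∈ Q, 0 < q)
    (hfree : ∀ q : ℕ, 0 < q → (q ∈ Q ↔ ∀ v : ℕ, 0 < v → v ∉ Q → ¬ v ∣ q))
    (Supp : Set ℕ) (hSupp : Supp = {p : ℕ | p.Prime ∧ ∃ q ∈ Q, p ∣ q})
    (C : Set ℕ) (hC : C = {m : ℕ | 0 < m ∧ ∀ p : ℕ, p.Prime → p ∣ m → p ∈ Supp}) :
    ∀ ν : ℝ, 0 < ν →
      (∑' p : Supp, ((p : ℕ) : ENNReal) ^ (-ν)) ≤ (∑' q : Q, ((q : ℕ) : ENNReal) ^ (-ν)) ∧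
      (∑' q : Q, ((q : ℕ) : ENNReal) ^ (-ν)) ≤ (∑' m : C, ((m : ℕ) : ENNReal) ^ (-ν)) ∧
      (Summable (fun q : Q => ((q : ℕ) : ℝ) ^ (-ν)) ↔
        Summable (fun p : Supp => ((p : ℕ) : ℝ) ^ (-ν))) := by
  intro ν hν
  have hSuppQ : Supp ⊆ Q := by
    intro p hp
    rw [hSupp] at hp
    obtain ⟨hprime, q, hq, hdvd⟩ := hp
    by_contra hpQ
    exact ((hfree q (hQpos q hq)).mp hq) p hprime.pos hpQ hdvd
  have hQC : Q ⊆ C := by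
    intro q hq
    rw [hC]
    exact ⟨hQpos q hq, fun p hp hdvd => hSupp ▸ ⟨hp, q, hq, hdvd⟩⟩
  have hSuppPrime : ∀ p ∈ Supp, p.Prime := by
    intro p hp; rw [hSupp] at hp; exact hp.1
  refine ⟨ENNReal.tsum_mono_subtype (fun n : ℕ => ((n : ℝ≥0∞)) ^ (-ν)) hSuppQ,
    ENNReal.tsum_mono_subtype (fun n : ℕ => ((n : ℝ≥0∞)) ^ (-ν)) hQC, ?_, ?_⟩
  · intro h
    have := h.comp_injective (Set.inclusion_injective hSuppQ)
    exact this.congr fun p => rfl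
  · intro h
    have hSpos : ∀ p : Supp, 0 < (p : ℕ) := fun p => (hSuppPrime p p.2).pos
    have h1 : (∑' p : Supp, ((p : ℕ) : ℝ≥0∞) ^ (-ν)) ≠ ⊤ := (aux_bridge hSpos ν).mp h
    have h2 := aux_key Supp hSuppPrime ν hν h1
    have h3 : (∑' q : Q, ((q : ℕ) : ℝ≥0∞) ^ (-ν)) ≠ ⊤ := by
      rw [hC] at hQC
      exact ne_top_of_le_ne_top h2
        (ENNReal.tsum_mono_subtype (fun n : ℕ => ((n : ℝ≥0∞)) ^ (-ν)) hQC)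
    exact (aux_bridge (fun q : Q => hQpos q q.2) ν).mpr h3
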